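/- Let X be a real linear space with X₀ = X \ {0}, Y a real Banach space, r, s, t positive integers, and ε > 0. If f : X → Y satisfies f(0) = 0 and ‖r·f((s·x + t·y)/r) − s·f(x) − t·f(y)‖ ≤ ε for all x, y ∈ X₀ (i.e., x ≠ 0 and y ≠ 0), then there exists a unique additive map A : X → Y such that ‖f(x) − A(x)‖ ≤ min{3ε/r, 5ε/(2s), 5ε/(2t)} + 2ε/r for all x ∈ X. -/

import Mathlib

open Filter Topology

set_option maxHeartbeats 1000000

theorem stmt_8 {X Y : Type*} [AddCommGroup X] [Module ℝ X]
    [NormedAddCommGroup Y] [NormedSpace ℝ Y] [CompleteSpace Y]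
    (r s t : ℕ) (hr : 0 < r) (hs : 0 < s) (ht : 0 < t)
    (ε : ℝ) (hε : 0 < ε)
    (f : X → Y) (hf0 : f 0 = 0)
    (hineq : ∀ x y : X, x ≠ 0 → y ≠ 0 →
      ‖(r : ℝ) • f (((r : ℝ)⁻¹) • ((s : ℝ) • x + (t : ℝ) • y)) - (s : ℝ) • f x - (t : ℝ) • f y‖
        ≤ ε) :
    ∃! A : X → Y, (∀ x y : X, A (x + y) = A x + A y) ∧
      ∀ x : X, ‖f x - A x‖ ≤
        min (3 * ε / r) (min (5 * ε / (2 * s)) (5 * ε / (2 * t))) + 2 * ε / r := by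
  have hr' : (0:ℝ) < r := by exact_mod_cast hr
  have hs' : (0:ℝ) < s := by exact_mod_cast hs
  have ht' : (0:ℝ) < t := by exact_mod_cast ht
  have hrne : (r:ℝ) ≠ 0 := hr'.ne'
  have hsne : (s:ℝ) ≠ 0 := hs'.ne'
  have htne : (t:ℝ) ≠ 0 := ht'.ne'
  -- Step 1 : doubling bound
  have hdouble : ∀ x : X, ‖f ((2:ℝ) • x) - (2:ℝ) • f x‖ ≤ 4 * ε / r := by
    intro x
    rcases eq_or_ne x 0 with rfl | hx
    · simp only [smul_zero, hf0, sub_zero, norm_zero]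
      positivity
    · have hu1 : ((3*r/s : ℝ)) • x ≠ 0 := smul_ne_zero (by positivity) hx
      have hu2 : ((2*r/s : ℝ)) • x ≠ 0 := smul_ne_zero (by positivity) hx
      have hv1 : ((-(r/t) : ℝ)) • x ≠ 0 :=
        smul_ne_zero (neg_ne_zero.mpr (by positivity)) hx
      have hv2 : ((-(2*r/t) : ℝ)) • x ≠ 0 :=
        smul_ne_zero (neg_ne_zero.mpr (by positivity)) hx
      have h1 := hineq _ _ hu1 hv1
      have h2 := hineq _ _ hu2 hv1
      have h3 := hineq _ _ hu1 hv2
      have h4 := hineq _ _ hu2 hv2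
      have e1 : (r:ℝ)⁻¹ • ((s:ℝ) • (((3*r/s:ℝ))•x) + (t:ℝ) • (((-(r/t):ℝ))•x)) = (2:ℝ)•x := by
        match_scalars
        field_simp
        ring
      have e2 : (r:ℝ)⁻¹ • ((s:ℝ) • (((2*r/s:ℝ))•x) + (t:ℝ) • (((-(r/t):ℝ))•x)) = x := by
        match_scalars
        field_simp
        ring
      have e3 : (r:ℝ)⁻¹ • ((s:ℝ) • (((3*r/s:ℝ))•x) + (t:ℝ) • (((-(2*r/t):ℝ))•x)) = x := by
        match_scalars
        field_simp
        ring
      have e4 : (r:ℝ)⁻¹ • ((s:ℝ) • (((2*r/s:ℝ))•x) + (t:ℝ) • (((-(2*r/t):ℝ))•x)) = (0:X) := by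
        match_scalars
        field_simp
        ring
      rw [e1] at h1
      rw [e2] at h2
      rw [e3] at h3
      rw [e4] at h4
      have key : (r:ℝ) • f ((2:ℝ)•x) - (2:ℝ) • ((r:ℝ) • f x) =
          ((r:ℝ) • f ((2:ℝ)•x) - (s:ℝ)•f (((3*r/s:ℝ))•x) - (t:ℝ)•f (((-(r/t):ℝ))•x))
          - ((r:ℝ) • f x - (s:ℝ)•f (((2*r/s:ℝ))•x) - (t:ℝ)•f (((-(r/t):ℝ))•x))
          - ((r:ℝ) • f x - (s:ℝ)•f (((3*r/s:ℝ))•x) - (t:ℝ)•f (((-(2*r/t):ℝ))•x))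
          + ((r:ℝ) • f (0:X) - (s:ℝ)•f (((2*r/s:ℝ))•x) - (t:ℝ)•f (((-(2*r/t):ℝ))•x)) := by
        rw [hf0]
        module
      have hnorm : ‖(r:ℝ) • f ((2:ℝ)•x) - (2:ℝ) • ((r:ℝ) • f x)‖ ≤ 4*ε := by
        rw [key]
        have T1 := norm_add_le
          (((r:ℝ) • f ((2:ℝ)•x) - (s:ℝ)•f (((3*r/s:ℝ))•x) - (t:ℝ)•f (((-(r/t):ℝ))•x))
          - ((r:ℝ) • f x - (s:ℝ)•f (((2*r/s:ℝ))•x) - (t:ℝ)•f (((-(r/t):ℝ))•x))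
          - ((r:ℝ) • f x - (s:ℝ)•f (((3*r/s:ℝ))•x) - (t:ℝ)•f (((-(2*r/t):ℝ))•x)))
          ((r:ℝ) • f (0:X) - (s:ℝ)•f (((2*r/s:ℝ))•x) - (t:ℝ)•f (((-(2*r/t):ℝ))•x))
        have T2 := norm_sub_le
          (((r:ℝ) • f ((2:ℝ)•x) - (s:ℝ)•f (((3*r/s:ℝ))•x) - (t:ℝ)•f (((-(r/t):ℝ))•x))
          - ((r:ℝ) • f x - (s:ℝ)•f (((2*r/s:ℝ))•x) - (t:ℝ)•f (((-(r/t):ℝ))•x)))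
          ((r:ℝ) • f x - (s:ℝ)•f (((3*r/s:ℝ))•x) - (t:ℝ)•f (((-(2*r/t):ℝ))•x))
        have T3 := norm_sub_le
          ((r:ℝ) • f ((2:ℝ)•x) - (s:ℝ)•f (((3*r/s:ℝ))•x) - (t:ℝ)•f (((-(r/t):ℝ))•x))
          ((r:ℝ) • f x - (s:ℝ)•f (((2*r/s:ℝ))•x) - (t:ℝ)•f (((-(r/t):ℝ))•x))
        linarith
      have h5 : (r:ℝ) • (f ((2:ℝ)•x) - (2:ℝ)•f x)
          = (r:ℝ) • f ((2:ℝ)•x) - (2:ℝ) • ((r:ℝ) • f x) := by module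
      rw [le_div_iff₀ hr']
      calc ‖f ((2:ℝ)•x) - (2:ℝ)•f x‖ * r
          = ‖(r:ℝ) • (f ((2:ℝ)•x) - (2:ℝ)•f x)‖ := by
            rw [norm_smul, Real.norm_eq_abs, abs_of_pos hr', mul_comm]
        _ ≤ 4*ε := by rw [h5]; exact hnorm
  -- Step 2 : the approximating sequence
  set sq : X → ℕ → Y := fun x n => ((1:ℝ)/2)^n • f ((2:ℝ)^n • x) with hsq
  have hdist : ∀ x n, dist (sq x n) (sq x (n+1)) ≤ (2*ε/r) * (1/2)^n := by
    intro x n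
    rw [dist_eq_norm]
    have hd := hdouble ((2:ℝ)^n • x)
    have harg : (2:ℝ) • ((2:ℝ)^n • x) = (2:ℝ)^(n+1) • x := by
      match_scalars; ring
    rw [harg] at hd
    have hrepr : sq x n - sq x (n+1)
        = ((1:ℝ)/2)^(n+1) • ((2:ℝ)•f ((2:ℝ)^n • x) - f ((2:ℝ)^(n+1) • x)) := by
      simp only [hsq]
      match_scalars <;> ring
    rw [hrepr, norm_smul, Real.norm_eq_abs, abs_of_pos (by positivity)]
    have hh : ‖(2:ℝ)•f ((2:ℝ)^n • x) - f ((2:ℝ)^(n+1) • x)‖ ≤ 4*ε/r := by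
      rw [norm_sub_rev]; exact hd
    calc ((1:ℝ)/2)^(n+1) * ‖(2:ℝ)•f ((2:ℝ)^n • x) - f ((2:ℝ)^(n+1) • x)‖
        ≤ ((1:ℝ)/2)^(n+1) * (4*ε/r) := by
          exact mul_le_mul_of_nonneg_left hh (by positivity)
      _ = (2*ε/r) * (1/2)^n := by ring
  have hconv : ∀ x, ∃ L, Tendsto (sq x) atTop (𝓝 L) := fun x =>
    cauchySeq_tendsto_of_complete
      (cauchySeq_of_le_geometric (1/2) (2*ε/r) (by norm_num) (hdist x))
  choose A hA using hconv
  have hbound : ∀ x, ‖f x - A x‖ ≤ 4*ε/r := by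
    intro x
    have h0 : sq x 0 = f x := by simp [hsq]
    have hd := dist_le_of_le_geometric_of_tendsto₀ (1/2) (2*ε/r) (by norm_num)
      (hdist x) (hA x)
    rw [h0, dist_eq_norm] at hd
    calc ‖f x - A x‖ ≤ (2*ε/r) / (1 - 1/2) := hd
      _ = 4*ε/r := by ring
  have hA0 : A 0 = 0 := by
    have hz : Tendsto (sq 0) atTop (𝓝 0) := by
      have : sq 0 = fun _ => (0:Y) := by
        funext n; simp [hsq, hf0]
      rw [this]; exact tendsto_const_nhds
    exact tendsto_nhds_unique (hA 0) hz
  have hA2 : ∀ x, A ((2:ℝ)•x) = (2:ℝ) • A x := by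
    intro x
    have h1 : Tendsto (fun n => (2:ℝ) • sq x (n+1)) atTop (𝓝 ((2:ℝ) • A x)) :=
      ((hA x).comp (Filter.tendsto_add_atTop_nat 1)).const_smul _
    have h2 : (fun n => (2:ℝ) • sq x (n+1)) = sq ((2:ℝ)•x) := by
      funext n
      simp only [hsq]
      have harg : (2:ℝ)^n • ((2:ℝ)•x) = (2:ℝ)^(n+1) • x := by
        match_scalars; ring
      rw [harg]
      match_scalars <;> ring
    rw [h2] at h1
    exact tendsto_nhds_unique (hA ((2:ℝ)•x)) h1
  -- Step 3 : A satisfies the equation exactly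
  have hEA : ∀ x y : X, x ≠ 0 → y ≠ 0 →
      (r:ℝ) • A ((r:ℝ)⁻¹ • ((s:ℝ)•x + (t:ℝ)•y)) = (s:ℝ) • A x + (t:ℝ) • A y := by
    intro x y hx hy
    set z := (r:ℝ)⁻¹ • ((s:ℝ)•x + (t:ℝ)•y) with hz
    have hW : ∀ n : ℕ, ‖(r:ℝ) • sq z n - (s:ℝ) • sq x n - (t:ℝ) • sq y n‖ ≤ ε * (1/2)^n := by
      intro n
      have hxn : (2:ℝ)^n • x ≠ 0 := smul_ne_zero (by positivity) hx
      have hyn : (2:ℝ)^n • y ≠ 0 := smul_ne_zero (by positivity) hy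
      have h := hineq _ _ hxn hyn
      have harg : (r:ℝ)⁻¹ • ((s:ℝ)•((2:ℝ)^n • x) + (t:ℝ)•((2:ℝ)^n • y)) = (2:ℝ)^n • z := by
        rw [hz]; match_scalars <;> ring
      rw [harg] at h
      have hrepr : (r:ℝ) • sq z n - (s:ℝ) • sq x n - (t:ℝ) • sq y n
          = ((1:ℝ)/2)^n • ((r:ℝ) • f ((2:ℝ)^n • z) - (s:ℝ) • f ((2:ℝ)^n • x)
              - (t:ℝ) • f ((2:ℝ)^n • y)) := by
        simp only [hsq]
        match_scalars <;> ring
      rw [hrepr, norm_smul, Real.norm_eq_abs, abs_of_pos (by positivity)]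
      calc ((1:ℝ)/2)^n * ‖(r:ℝ) • f ((2:ℝ)^n • z) - (s:ℝ) • f ((2:ℝ)^n • x)
              - (t:ℝ) • f ((2:ℝ)^n • y)‖
          ≤ ((1:ℝ)/2)^n * ε := mul_le_mul_of_nonneg_left h (by positivity)
        _ = ε * (1/2)^n := by ring
    have hlim0 : Tendsto (fun n => (r:ℝ) • sq z n - (s:ℝ) • sq x n - (t:ℝ) • sq y n)
        atTop (𝓝 0) := by
      refine squeeze_zero_norm hW ?_
      simpa using (tendsto_pow_atTop_nhds_zero_of_lt_one (by norm_num : (0:ℝ) ≤ 1/2)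
        (by norm_num)).const_mul ε
    have hlim : Tendsto (fun n => (r:ℝ) • sq z n - (s:ℝ) • sq x n - (t:ℝ) • sq y n)
        atTop (𝓝 ((r:ℝ) • A z - (s:ℝ) • A x - (t:ℝ) • A y)) :=
      (((hA z).const_smul _).sub ((hA x).const_smul _)).sub ((hA y).const_smul _)
    have hzero := tendsto_nhds_unique hlim hlim0
    rw [sub_sub, sub_eq_zero] at hzero
    exact hzero
  -- Step 4 : A is additive
  have key : ∀ p q : X, p ≠ 0 → q ≠ 0 → (r:ℝ) • A (p + q)
      = (s:ℝ) • A ((r/s:ℝ)•p) + (t:ℝ) • A ((r/t:ℝ)•q) := by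
    intro p q hp hq
    have hp' : ((r/s:ℝ))•p ≠ 0 := smul_ne_zero (by positivity) hp
    have hq' : ((r/t:ℝ))•q ≠ 0 := smul_ne_zero (by positivity) hq
    have h := hEA _ _ hp' hq'
    have harg : (r:ℝ)⁻¹ • ((s:ℝ)•((r/s:ℝ)•p) + (t:ℝ)•((r/t:ℝ)•q)) = p + q := by
      match_scalars <;> field_simp
    rw [harg] at h
    exact h
  have hzero : ∀ p : X, p ≠ 0 →
      (t:ℝ) • A ((r/t:ℝ)•(-p)) = -((s:ℝ) • A ((r/s:ℝ)•p)) := by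
    intro p hp
    have h := key p (-p) hp (neg_ne_zero.mpr hp)
    rw [add_neg_cancel, hA0, smul_zero] at h
    exact eq_neg_of_add_eq_zero_right h.symm
  have hEB : ∀ p q : X, p ≠ 0 → q ≠ 0 → (r:ℝ) • A (p + q)
      = (s:ℝ) • A ((r/s:ℝ)•p) - (s:ℝ) • A ((r/s:ℝ)•(-q)) := by
    intro p q hp hq
    have h := key p q hp hq
    have h2 := hzero (-q) (neg_ne_zero.mpr hq)
    rw [neg_neg] at h2
    rw [h2] at h
    rw [h, ← sub_eq_add_neg]
  have hOD : ∀ p : X, p ≠ 0 →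
      (s:ℝ) • A ((r/s:ℝ)•p) - (s:ℝ) • A ((r/s:ℝ)•(-p)) = ((2*r:ℝ)) • A p := by
    intro p hp
    have h := hEB p p hp hp
    have htwo : p + p = (2:ℝ)•p := (two_smul ℝ p).symm
    rw [htwo, hA2] at h
    rw [← h]
    module
  have hEV : ∀ p q : X, p ≠ 0 → q ≠ 0 →
      (s:ℝ) • A ((r/s:ℝ)•p) + (s:ℝ) • A ((r/s:ℝ)•(-p))
      = (s:ℝ) • A ((r/s:ℝ)•q) + (s:ℝ) • A ((r/s:ℝ)•(-q)) := by
    intro p q hp hq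
    have h1 := hEB p q hp hq
    have h2 := hEB q p hq hp
    rw [add_comm q p] at h2
    rw [h1] at h2
    have h3 : (s:ℝ) • A ((r/s:ℝ)•p) + (s:ℝ) • A ((r/s:ℝ)•(-p))
        = ((s:ℝ) • A ((r/s:ℝ)•p) - (s:ℝ) • A ((r/s:ℝ)•(-q)))
          + ((s:ℝ) • A ((r/s:ℝ)•(-q)) + (s:ℝ) • A ((r/s:ℝ)•(-p))) := by abel
    rw [h3, h2]
    abel
  have hAadd : ∀ a b : X, A (a + b) = A a + A b := by
    intro a b
    rcases eq_or_ne a 0 with rfl | ha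
    · simp [hA0]
    rcases eq_or_ne b 0 with rfl | hb
    · simp [hA0]
    have h1 := hEB a b ha hb
    have h2 := hOD a ha
    have h3 := hOD b hb
    have h4 := hEV a b ha hb
    have hmain : ((2*r:ℝ)) • (A (a+b) - A a - A b)
        = ((s:ℝ) • A ((r/s:ℝ)•a) + (s:ℝ) • A ((r/s:ℝ)•(-a)))
          - ((s:ℝ) • A ((r/s:ℝ)•b) + (s:ℝ) • A ((r/s:ℝ)•(-b))) := by
      calc ((2*r:ℝ)) • (A (a+b) - A a - A b)
          = (2:ℝ)•((r:ℝ) • A (a+b)) - ((2*r:ℝ)) • A a - ((2*r:ℝ)) • A b := by module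
        _ = (2:ℝ)•((s:ℝ) • A ((r/s:ℝ)•a) - (s:ℝ) • A ((r/s:ℝ)•(-b)))
            - ((s:ℝ) • A ((r/s:ℝ)•a) - (s:ℝ) • A ((r/s:ℝ)•(-a)))
            - ((s:ℝ) • A ((r/s:ℝ)•b) - (s:ℝ) • A ((r/s:ℝ)•(-b))) := by
            rw [h1, h2, h3]
        _ = ((s:ℝ) • A ((r/s:ℝ)•a) + (s:ℝ) • A ((r/s:ℝ)•(-a)))
            - ((s:ℝ) • A ((r/s:ℝ)•b) + (s:ℝ) • A ((r/s:ℝ)•(-b))) := by module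
    rw [h4, sub_self] at hmain
    rcases smul_eq_zero.mp hmain with h | h
    · exact absurd h (by positivity)
    · rw [sub_sub, sub_eq_zero] at h
      exact h
  -- Step 5 : refined bound when s + t > r
  have hM2 : (r:ℝ) < (s:ℝ) + t → ∀ x : X, ‖f x - A x‖ ≤ ε / ((s:ℝ) + t - r) := by
    intro hlt x
    have hD : (0:ℝ) < (s:ℝ) + t - r := by linarith
    rcases eq_or_ne x 0 with rfl | hx
    · simp only [hf0, hA0, sub_zero, norm_zero]
      positivity
    set lam : ℝ := ((s:ℝ)+t)/r with hlam
    have hlampos : 0 < lam := by positivity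
    have hlam1 : 1 < lam := by rw [hlam, lt_div_iff₀ hr']; linarith
    set mu : ℝ := (r:ℝ)/((s:ℝ)+t) with hmu
    have hmupos : 0 < mu := by positivity
    have hmu1 : mu < 1 := by rw [hmu, div_lt_one (by positivity)]; linarith
    have hmulam : mu * lam = 1 := by
      rw [hmu, hlam]; field_simp
    clear_value lam mu
    have hiter : ∀ p : X, p ≠ 0 →
        ‖(f (lam • p) - A (lam • p)) - lam • (f p - A p)‖ ≤ ε / r := by
      intro p hp
      have h := hineq p p hp hp
      have hAe := hEA p p hp hp
      have harg : (r:ℝ)⁻¹ • ((s:ℝ)•p + (t:ℝ)•p) = lam • p := by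
        rw [hlam]; match_scalars; field_simp
      rw [harg] at h hAe
      have hAe0 : (r:ℝ) • A (lam•p) - (s:ℝ) • A p - (t:ℝ) • A p = 0 := by
        rw [sub_sub, hAe, sub_self]
      have hrepr : (r:ℝ) • ((f (lam•p) - A (lam•p)) - lam • (f p - A p))
          = ((r:ℝ) • f (lam•p) - (s:ℝ) • f p - (t:ℝ) • f p)
            - ((r:ℝ) • A (lam•p) - (s:ℝ) • A p - (t:ℝ) • A p) := by
        rw [hlam]
        match_scalars <;> field_simp <;> ring
      have hsub : ‖(r:ℝ) • ((f (lam•p) - A (lam•p)) - lam • (f p - A p))‖ ≤ ε := by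
        rw [hrepr, hAe0, sub_zero]
        exact h
      rw [norm_smul, Real.norm_eq_abs, abs_of_pos hr'] at hsub
      rw [le_div_iff₀ hr']
      linarith [hsub]
    have hind : ∀ n : ℕ, ‖f x - A x‖ ≤ (ε/((s:ℝ)+t-r)) * (1 - mu^n)
        + mu^n * ‖f (lam^n • x) - A (lam^n • x)‖ := by
      intro n
      induction n with
      | zero => simp
      | succ n ih =>
        have hxn : lam^n • x ≠ 0 := smul_ne_zero (by positivity) hx
        have hstep := hiter (lam^n • x) hxn
        have harg2 : lam • (lam^n • x) = lam^(n+1) • x := by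
          rw [smul_smul, ← pow_succ']
        rw [harg2] at hstep
        have hnsmul : ‖lam • (f (lam^n • x) - A (lam^n • x))‖
            = lam * ‖f (lam^n • x) - A (lam^n • x)‖ := by
          rw [norm_smul, Real.norm_eq_abs, abs_of_pos hlampos]
        have htri : lam * ‖f (lam^n • x) - A (lam^n • x)‖
            ≤ ‖f (lam^(n+1) • x) - A (lam^(n+1) • x)‖ + ε/r := by
          have h1 := norm_sub_norm_le (lam • (f (lam^n • x) - A (lam^n • x)))
            (f (lam^(n+1) • x) - A (lam^(n+1) • x))
          have h2 : ‖lam • (f (lam^n • x) - A (lam^n • x))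
              - (f (lam^(n+1) • x) - A (lam^(n+1) • x))‖
              = ‖(f (lam^(n+1) • x) - A (lam^(n+1) • x))
              - lam • (f (lam^n • x) - A (lam^n • x))‖ := norm_sub_rev _ _
          rw [hnsmul, h2] at h1
          linarith [hstep, h1]
        have hme : mu * (ε/r) = ε/((s:ℝ)+t) := by
          rw [hmu]; field_simp
          all_goals ring
        have hgn : ‖f (lam^n • x) - A (lam^n • x)‖
            ≤ mu * ‖f (lam^(n+1) • x) - A (lam^(n+1) • x)‖ + ε/((s:ℝ)+t) := by
          have h2 := mul_le_mul_of_nonneg_left htri hmupos.le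
          have e1 : mu * (lam * ‖f (lam^n • x) - A (lam^n • x)‖)
              = ‖f (lam^n • x) - A (lam^n • x)‖ := by
            rw [← mul_assoc, hmulam, one_mul]
          rw [e1, mul_add, hme] at h2
          exact h2
        have hc : (ε/((s:ℝ)+t-r)) * (1-mu) = ε/((s:ℝ)+t) := by
          have hstne : ((s:ℝ)+t) ≠ 0 := by positivity
          rw [hmu, div_mul_eq_mul_div, div_eq_div_iff hD.ne' hstne]
          field_simp
          all_goals ring
        calc ‖f x - A x‖
            ≤ (ε/((s:ℝ)+t-r)) * (1 - mu^n) + mu^n * ‖f (lam^n • x) - A (lam^n • x)‖ := ih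
          _ ≤ (ε/((s:ℝ)+t-r)) * (1 - mu^n)
              + mu^n * (mu * ‖f (lam^(n+1) • x) - A (lam^(n+1) • x)‖ + ε/((s:ℝ)+t)) :=
              add_le_add (le_refl _) (mul_le_mul_of_nonneg_left hgn (pow_nonneg hmupos.le n))
          _ = (ε/((s:ℝ)+t-r)) * (1 - mu^(n+1))
              + mu^(n+1) * ‖f (lam^(n+1) • x) - A (lam^(n+1) • x)‖ := by
              linear_combination (-(mu ^ n)) * hc
    have hbnd : ∀ n : ℕ, ‖f x - A x‖ ≤ (ε/((s:ℝ)+t-r)) * (1 - mu^n) + mu^n * (4*ε/r) := by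
      intro n
      refine (hind n).trans ?_
      exact add_le_add (le_refl _)
        (mul_le_mul_of_nonneg_left (hbound (lam^n • x)) (pow_nonneg hmupos.le n))
    have hmut : Tendsto (fun n : ℕ => mu^n) atTop (𝓝 0) :=
      tendsto_pow_atTop_nhds_zero_of_lt_one hmupos.le hmu1
    have hlim : Tendsto (fun n : ℕ => (ε/((s:ℝ)+t-r)) * (1 - mu^n) + mu^n * (4*ε/r))
        atTop (𝓝 ((ε/((s:ℝ)+t-r)) * (1 - 0) + 0 * (4*ε/r))) :=
      ((tendsto_const_nhds.sub hmut).const_mul _).add (hmut.mul_const _)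
    have := ge_of_tendsto' hlim hbnd
    simpa using this
  -- Step 6 : the final bound
  have hfinal : ∀ x : X, ‖f x - A x‖ ≤
      min (3 * ε / r) (min (5 * ε / (2 * s)) (5 * ε / (2 * t))) + 2 * ε / r := by
    intro x
    have hb4 := hbound x
    rw [← min_add_add_right, ← min_add_add_right]
    refine le_min ?_ (le_min ?_ ?_)
    · calc ‖f x - A x‖ ≤ 4*ε/r := hb4
        _ ≤ 3*ε/r + 2*ε/r := by
          rw [← add_div]
          exact (div_le_div_iff_of_pos_right hr').mpr (by linarith)
    · rcases le_or_gt (4*(s:ℝ)) (5*r) with hcase | hcase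
      · have h1 : 2*ε/r ≤ 5*ε/(2*s) := by
          rw [div_le_div_iff₀ hr' (by positivity)]
          nlinarith
        calc ‖f x - A x‖ ≤ 4*ε/r := hb4
          _ = 2*ε/r + 2*ε/r := by ring
          _ ≤ 5 * ε / (2 * s) + 2 * ε / r := by linarith
      · have hlt : (r:ℝ) < (s:ℝ)+t := by linarith
        have hD : (0:ℝ) < (s:ℝ)+t-r := by linarith
        refine (hM2 hlt x).trans ?_
        have hx1 : (0:ℝ) ≤ ε * ((4*(s:ℝ)-5*r) * ((s:ℝ)+r)) := by
          apply mul_nonneg hε.le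
          apply mul_nonneg (by linarith) (by positivity)
        have hx2 : (0:ℝ) ≤ ε * ((5*(r:ℝ)+4*s) * t) := by
          apply mul_nonneg hε.le
          apply mul_nonneg (by positivity) ht'.le
        rw [div_add_div _ _ (by positivity : (2*(s:ℝ)) ≠ 0) hrne, div_le_div_iff₀ hD (by positivity)]
        nlinarith [hx1, hx2]
    · rcases le_or_gt (4*(t:ℝ)) (5*r) with hcase | hcase
      · have h1 : 2*ε/r ≤ 5*ε/(2*t) := by
          rw [div_le_div_iff₀ hr' (by positivity)]
          nlinarith
        calc ‖f x - A x‖ ≤ 4*ε/r := hb4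
          _ = 2*ε/r + 2*ε/r := by ring
          _ ≤ 5 * ε / (2 * t) + 2 * ε / r := by linarith
      · have hlt : (r:ℝ) < (s:ℝ)+t := by linarith
        have hD : (0:ℝ) < (s:ℝ)+t-r := by linarith
        refine (hM2 hlt x).trans ?_
        have hx1 : (0:ℝ) ≤ ε * ((4*(t:ℝ)-5*r) * ((t:ℝ)+r)) := by
          apply mul_nonneg hε.le
          apply mul_nonneg (by linarith) (by positivity)
        have hx2 : (0:ℝ) ≤ ε * ((5*(r:ℝ)+4*t) * s) := by
          apply mul_nonneg hε.le
          apply mul_nonneg (by positivity) hs'.le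
        rw [div_add_div _ _ (by positivity : (2*(t:ℝ)) ≠ 0) hrne, div_le_div_iff₀ hD (by positivity)]
        nlinarith [hx1, hx2]
  -- Step 7 : conclusion and uniqueness
  refine ⟨A, ⟨hAadd, hfinal⟩, ?_⟩
  rintro A' ⟨hadd', hbd'⟩
  funext x
  have hpow : ∀ (T : X → Y), (∀ a b : X, T (a+b) = T a + T b) →
      ∀ (n:ℕ) (p : X), T ((2:ℝ)^n • p) = (2:ℝ)^n • T p := by
    intro T hT n p
    induction n with
    | zero => simp
    | succ n ih =>
      have h1 : (2:ℝ)^(n+1) • p = (2:ℝ)^n • p + (2:ℝ)^n • p := by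
        match_scalars; ring
      rw [h1, hT, ih]
      match_scalars; ring
  have hBnn : (0:ℝ) ≤ min (3 * ε / r) (min (5 * ε / (2 * s)) (5 * ε / (2 * t))) + 2 * ε / r := by
    have h1 : (0:ℝ) ≤ min (3 * ε / r) (min (5 * ε / (2 * s)) (5 * ε / (2 * t))) :=
      le_min (by positivity) (le_min (by positivity) (by positivity))
    have h2 : (0:ℝ) ≤ 2 * ε / r := by positivity
    linarith
  set B := min (3 * ε / r) (min (5 * ε / (2 * s)) (5 * ε / (2 * t))) + 2 * ε / r with hBdef
  have hdiff : ∀ n : ℕ, ‖A' x - A x‖ ≤ 2*B*(1/2)^n := by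
    intro n
    have h1 : (2:ℝ)^n • (A' x - A x)
        = (A' ((2:ℝ)^n • x) - f ((2:ℝ)^n • x)) + (f ((2:ℝ)^n • x) - A ((2:ℝ)^n • x)) := by
      rw [hpow A' hadd' n x, hpow A hAadd n x]
      module
    have h2 : ‖(2:ℝ)^n • (A' x - A x)‖ ≤ 2*B := by
      rw [h1]
      calc ‖(A' ((2:ℝ)^n • x) - f ((2:ℝ)^n • x)) + (f ((2:ℝ)^n • x) - A ((2:ℝ)^n • x))‖
          ≤ ‖A' ((2:ℝ)^n • x) - f ((2:ℝ)^n • x)‖ + ‖f ((2:ℝ)^n • x) - A ((2:ℝ)^n • x)‖ :=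
            norm_add_le _ _
        _ ≤ B + B := add_le_add (by rw [norm_sub_rev]; exact hbd' _) (hfinal _)
        _ = 2*B := by ring
    rw [norm_smul, Real.norm_eq_abs, abs_of_pos (by positivity : (0:ℝ) < (2:ℝ)^n)] at h2
    calc ‖A' x - A x‖ = ((2:ℝ)^n)⁻¹ * ((2:ℝ)^n * ‖A' x - A x‖) := by
          field_simp
      _ ≤ ((2:ℝ)^n)⁻¹ * (2*B) := mul_le_mul_of_nonneg_left h2 (by positivity)
      _ = 2*B*(1/2)^n := by
          rw [one_div, inv_pow]; ring
  have hlz : Tendsto (fun n : ℕ => 2*B*(1/2)^n) atTop (𝓝 0) := by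
    simpa using (tendsto_pow_atTop_nhds_zero_of_lt_one (by norm_num : (0:ℝ) ≤ 1/2)
      (by norm_num : (1:ℝ)/2 < 1)).const_mul (2*B)
  have hzero : ‖A' x - A x‖ ≤ 0 := ge_of_tendsto' hlz hdiff
  have : A' x - A x = 0 := by
    rwa [norm_le_zero_iff] at hzero
  exact sub_eq_zero.mp this
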